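/- Let (𝒳, ω) be a left Frobenius pair in an abelian category 𝒞. The following are equivalent: (a) (𝒳, ω^∧) is a complete left cotorsion pair in 𝒞; (b) (𝒳, ω^∧) is a complete cotorsion pair in 𝒞; (c) every object of 𝒞 lies in 𝒳^∧ (that is, 𝒞 = 𝒳^∧). -/

import Mathlib

namespace CutPaper

open CategoryTheory CategoryTheory.Limits CategoryTheory.Abelian ZeroObject

universe w v u

variable {C : Type u} [Category.{v} C] [Abelian C]

/-- There exists a short exact sequence `0 ⟶ X ⟶ Y ⟶ Z ⟶ 0` in `C`. -/
def SES (X Y Z : C) : Prop :=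
  ∃ (f : X ⟶ Y) (g : Y ⟶ Z) (zero : f ≫ g = 0),
    (ShortComplex.mk f g zero).ShortExact

/-- A class of objects is closed under isomorphisms. -/
def ClosedUnderIso (A : Set C) : Prop :=
  ∀ ⦃X Y : C⦄, (X ≅ Y) → X ∈ A → Y ∈ A

/-- A class of objects is closed under direct summands (i.e. retracts). -/
def ClosedUnderDirectSummands (A : Set C) : Prop :=
  ∀ ⦃X Y : C⦄ (i : X ⟶ Y) (r : Y ⟶ X), i ≫ r = 𝟙 X → Y ∈ A → X ∈ A

/-- A class of objects is closed under extensions. -/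
def ClosedUnderExtensions (A : Set C) : Prop :=
  ∀ ⦃X Y Z : C⦄, SES X Y Z → X ∈ A → Z ∈ A → Y ∈ A

/-- A class of objects is closed under kernels of epimorphisms between its objects. -/
def ClosedUnderEpiKernels (A : Set C) : Prop :=
  ∀ ⦃X Y Z : C⦄, SES X Y Z → Y ∈ A → Z ∈ A → X ∈ A

/-- A class of objects is closed under cokernels of monomorphisms between its objects. -/
def ClosedUnderMonoCokernels (A : Set C) : Prop :=
  ∀ ⦃X Y Z : C⦄, SES X Y Z → X ∈ A → Y ∈ A → Z ∈ A

/-- A class is left thick if it is closed under extensions, epi-kernels and direct summands. -/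
def LeftThick (A : Set C) : Prop :=
  ClosedUnderExtensions A ∧ ClosedUnderEpiKernels A ∧ ClosedUnderDirectSummands A

/-- A class is right thick if closed under extensions, mono-cokernels and direct summands. -/
def RightThick (A : Set C) : Prop :=
  ClosedUnderExtensions A ∧ ClosedUnderMonoCokernels A ∧ ClosedUnderDirectSummands A

/-- A class is thick if it is both left and right thick. -/
def IsThickClass (A : Set C) : Prop := LeftThick A ∧ RightThick A

/-- The smallest thick class containing `F`. -/
def ThickClosure (F : Set C) : Set C := ⋂₀ {T : Set C | IsThickClass T ∧ F ⊆ T}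

/-- A class is closed under finite (binary) coproducts. -/
def ClosedUnderBinaryCoproducts (A : Set C) : Prop :=
  ∀ ⦃X Y : C⦄, X ∈ A → Y ∈ A → (X ⊞ Y) ∈ A

/-- `ω` is a relative cogenerator in `A`: `ω ⊆ A` and every `X ∈ A` fits in a short
exact sequence `0 → X → W → X' → 0` with `W ∈ ω`, `X' ∈ A`. -/
def IsRelativeCogenerator (ω A : Set C) : Prop :=
  ω ⊆ A ∧ ∀ X ∈ A, ∃ W X', W ∈ ω ∧ X' ∈ A ∧ SES X W X'

/-- `ν` is a relative generator in `ω`: `ν ⊆ ω` and every `W ∈ ω` fits in a short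
exact sequence `0 → W' → V → W → 0` with `V ∈ ν`, `W' ∈ ω`. -/
def IsRelativeGenerator (ν ω : Set C) : Prop :=
  ν ⊆ ω ∧ ∀ W ∈ ω, ∃ V W', V ∈ ν ∧ W' ∈ ω ∧ SES W' V W

/-- The objects of `B`-resolution dimension at most `n` (the class `B^∧_n`). -/
def ResDimLE (B : Set C) : ℕ → Set C
  | 0 => {X | ∃ B₀ ∈ B, Nonempty (X ≅ B₀)}
  | (n + 1) => ResDimLE B n ∪ {X | ∃ K B₀, K ∈ ResDimLE B n ∧ B₀ ∈ B ∧ SES K B₀ X}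

/-- The class `B^∧` of objects of finite `B`-resolution dimension. -/
def ResFin (B : Set C) : Set C := {X | ∃ n, X ∈ ResDimLE B n}

/-- The `B`-resolution dimension of an object, valued in `ℕ∞`. -/
noncomputable def resDim (B : Set C) (X : C) : ℕ∞ :=
  sInf ((fun n : ℕ => (n : ℕ∞)) '' {n | X ∈ ResDimLE B n})

/-- The objects of `B`-coresolution dimension at most `n` (the class `B^∨_n`). -/
def CoresDimLE (B : Set C) : ℕ → Set C
  | 0 => {X | ∃ B₀ ∈ B, Nonempty (X ≅ B₀)}
  | (n + 1) => CoresDimLE B n ∪ {X | ∃ B₀ K, B₀ ∈ B ∧ K ∈ CoresDimLE B n ∧ SES X B₀ K}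

/-- The `B`-coresolution dimension of an object, valued in `ℕ∞`. -/
noncomputable def coresDim (B : Set C) (X : C) : ℕ∞ :=
  sInf ((fun n : ℕ => (n : ℕ∞)) '' {n | X ∈ CoresDimLE B n})

/-- The class of `(𝒳, 𝒴)`-Gorenstein projective objects: 0-th cycles of exact,
`Hom(-, 𝒴)`-acyclic complexes with components in `𝒳`. -/
def GorensteinProj (𝒳 𝒴 : Set C) : Set C :=
  {M | ∃ K : ChainComplex C ℤ,
    (∀ m : ℤ, K.X m ∈ 𝒳) ∧
    (∀ m : ℤ, K.ExactAt m) ∧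
    (∀ Y₀ ∈ 𝒴, ∀ m : ℤ, ∀ f : K.X m ⟶ Y₀, K.d (m + 1) m ≫ f = 0 →
      ∃ g : K.X (m - 1) ⟶ Y₀, K.d m (m - 1) ≫ g = f) ∧
    Nonempty (M ≅ K.cycles 0)}

section HasExt

variable [HasExt.{w} C]

/-- `Ext¹(A, B) = 0`. -/
def ext1Zero (A B : C) : Prop := Subsingleton (Abelian.Ext.{w} A B 1)

/-- `Extⁱ(A, B) = 0` for all `i ≥ 1`. -/
def extVanish (A B : C) : Prop := ∀ i : ℕ, 1 ≤ i → Subsingleton (Abelian.Ext.{w} A B i)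

/-- `Extⁱ(X, Y) = 0` for all `i ≥ 1`, `X ∈ 𝒜`, `Y ∈ ℬ`. -/
def ExtPairVanish (𝒜 ℬ : Set C) : Prop := ∀ X ∈ 𝒜, ∀ Y ∈ ℬ, extVanish.{w} X Y

/-- The right `Ext¹`-orthogonal complement `𝒜^{⊥1}`. -/
def rightPerp1 (𝒜 : Set C) : Set C := {N | ∀ X ∈ 𝒜, ext1Zero.{w} X N}

/-- The total right orthogonal complement `𝒜^{⊥}`. -/
def rightPerp (𝒜 : Set C) : Set C := {N | ∀ X ∈ 𝒜, extVanish.{w} X N}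

/-- The left `Ext¹`-orthogonal complement `^{⊥1}ℬ`. -/
def leftPerp1 (ℬ : Set C) : Set C := {M | ∀ Y ∈ ℬ, ext1Zero.{w} M Y}

/-- `(𝒜, ℬ)` is a left cotorsion pair cut along `𝒮`. -/
def LeftCutCotorsion (𝒜 ℬ 𝒮 : Set C) : Prop :=
  ClosedUnderDirectSummands 𝒜 ∧ 𝒜 ∩ 𝒮 = leftPerp1.{w} ℬ ∩ 𝒮

/-- `(𝒜, ℬ)` is a complete left cotorsion pair cut along `𝒮`. -/
def CompleteLeftCutCotorsion (𝒜 ℬ 𝒮 : Set C) : Prop :=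
  LeftCutCotorsion.{w} 𝒜 ℬ 𝒮 ∧ ∀ S ∈ 𝒮, ∃ B₀ A₀, B₀ ∈ ℬ ∧ A₀ ∈ 𝒜 ∧ SES B₀ A₀ S

/-- `(𝒜, ℬ)` is a right cotorsion pair cut along `𝒮`. -/
def RightCutCotorsion (𝒜 ℬ 𝒮 : Set C) : Prop :=
  ClosedUnderDirectSummands ℬ ∧ ℬ ∩ 𝒮 = rightPerp1.{w} 𝒜 ∩ 𝒮

/-- `(𝒜, ℬ)` is a complete right cotorsion pair cut along `𝒮`. -/
def CompleteRightCutCotorsion (𝒜 ℬ 𝒮 : Set C) : Prop :=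
  RightCutCotorsion.{w} 𝒜 ℬ 𝒮 ∧ ∀ S ∈ 𝒮, ∃ B₀ A₀, B₀ ∈ ℬ ∧ A₀ ∈ 𝒜 ∧ SES S B₀ A₀

/-- `(𝒜, ℬ)` is a complete cotorsion pair cut along `𝒮`. -/
def CompleteCutCotorsion (𝒜 ℬ 𝒮 : Set C) : Prop :=
  CompleteLeftCutCotorsion.{w} 𝒜 ℬ 𝒮 ∧ CompleteRightCutCotorsion.{w} 𝒜 ℬ 𝒮

/-- `(𝒜, ℬ)` is a complete left cotorsion pair in `C`. -/
def CompleteLeftCotorsionPair (𝒜 ℬ : Set C) : Prop :=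
  𝒜 = leftPerp1.{w} ℬ ∧ ∀ X : C, ∃ B₀ A₀, B₀ ∈ ℬ ∧ A₀ ∈ 𝒜 ∧ SES B₀ A₀ X

/-- `(𝒜, ℬ)` is a complete cotorsion pair in `C`. -/
def CompleteCotorsionPair (𝒜 ℬ : Set C) : Prop :=
  CompleteLeftCotorsionPair.{w} 𝒜 ℬ ∧ ℬ = rightPerp1.{w} 𝒜 ∧
    ∀ X : C, ∃ B₀ A₀, B₀ ∈ ℬ ∧ A₀ ∈ 𝒜 ∧ SES X B₀ A₀

/-- `(𝒳, ω)` is a left Frobenius pair in `C`. -/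
def LeftFrobenius (𝒳 ω : Set C) : Prop :=
  LeftThick 𝒳 ∧ ClosedUnderDirectSummands ω ∧
    ExtPairVanish.{w} 𝒳 ω ∧ IsRelativeCogenerator ω 𝒳

/-- `(𝒳, ω)` is a left Frobenius pair cut along `𝒮`. -/
def LeftFrobeniusCutAlong (𝒳 ω 𝒮 : Set C) : Prop :=
  LeftThick 𝒳 ∧
  LeftFrobenius.{w} (𝒳 ∩ 𝒮) (ω ∩ 𝒮) ∧
  (ExtPairVanish.{w} (ω ∩ 𝒮) ω ∧ IsRelativeGenerator (ω ∩ 𝒮) ω) ∧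
  (ClosedUnderExtensions ω ∧ ClosedUnderDirectSummands ω)

/-- `(𝒜, ℬ)` is a left weak AB context in `C`. -/
def LeftWeakABContext (𝒜 ℬ : Set C) : Prop :=
  LeftFrobenius.{w} 𝒜 (𝒜 ∩ ℬ) ∧ RightThick ℬ ∧ ℬ ⊆ ResFin 𝒜

/-- `(𝒜, ℬ)` is a left weak AB context cut along `𝒮`. -/
def LeftWeakABContextCutAlong (𝒜 ℬ 𝒮 : Set C) : Prop :=
  LeftFrobeniusCutAlong.{w} 𝒜 (𝒜 ∩ ℬ) 𝒮 ∧ RightThick (ℬ ∩ 𝒮) ∧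
    ℬ ∩ 𝒮 ⊆ ResFin (𝒜 ∩ 𝒮)

/-- `(𝒳, 𝒴)` is a GP-admissible pair. -/
def GPAdmissible (𝒳 𝒴 : Set C) : Prop :=
  ExtPairVanish.{w} 𝒳 𝒴 ∧
  (∀ M : C, ∃ X₀, X₀ ∈ 𝒳 ∧ ∃ p : X₀ ⟶ M, Epi p) ∧
  ClosedUnderBinaryCoproducts 𝒳 ∧ ClosedUnderBinaryCoproducts 𝒴 ∧
  ClosedUnderExtensions 𝒳 ∧
  IsRelativeCogenerator (𝒳 ∩ 𝒴) 𝒳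

/-- The class `ℰ_l(𝒜, ℬ)` of objects admitting a suitable left approximation. -/
def EClassLeft (𝒜 ℬ : Set C) : Set C :=
  {X | ∃ B₀ A₀, B₀ ∈ ℬ ∧ A₀ ∈ 𝒜 ∧ SES B₀ A₀ X}

/-- The maximal left cotorsion cut `𝕊_l(𝒜, ℬ)`. -/
def MaxLeftCut (𝒜 ℬ : Set C) : Set C :=
  ⋃₀ {𝒮 | CompleteLeftCutCotorsion.{w} 𝒜 ℬ 𝒮}

/-- `pd(M) ≤ n`, via vanishing of `Ext` in degrees `> n`. -/
def pdLE (M : C) (n : ℕ) : Prop :=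
  ∀ i : ℕ, n < i → ∀ N : C, Subsingleton (Abelian.Ext.{w} M N i)

/-- The projective dimension of an object, valued in `ℕ∞`. -/
noncomputable def pd (M : C) : ℕ∞ :=
  sInf ((fun n : ℕ => (n : ℕ∞)) '' {n | pdLE.{w} M n})

/-- The projective dimension of a class of objects. -/
noncomputable def pdClass (𝒜 : Set C) : ℕ∞ := ⨆ M ∈ 𝒜, pd.{w} M

/-- The `𝔓_𝒮`-condition of the second correspondence theorem. -/
def PPair (𝒮 ℱ 𝒢 : Set C) : Prop :=
  CompleteCutCotorsion.{w} ℱ 𝒢 (ThickClosure ℱ) ∧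
  ExtPairVanish.{w} ℱ 𝒢 ∧
  IsRelativeGenerator (ℱ ∩ 𝒢 ∩ 𝒮) (ℱ ∩ 𝒢) ∧
  IsRelativeCogenerator (ℱ ∩ 𝒢 ∩ 𝒮) (ℱ ∩ 𝒢)

end HasExt

/-- The class of projective objects of `C`. -/
def ProjClass (C : Type u) [Category.{v} C] : Set C := {P : C | Projective P}

section HasExt
variable (C) [HasExt.{w} C]

/-- The finitistic dimension of `C`. -/
noncomputable def Findim : ℕ∞ := pdClass.{w} (ResFin (ProjClass C))

end HasExt




section AuxProofs

variable {C : Type u} [Category.{v} C] [Abelian C]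

open DerivedCategory in
/-- From an `Ext⁰`-level retraction we obtain a genuine retraction in `C`. -/
lemma retract_of_ext0 [HasExt.{w} C] {A B : C} (x : Abelian.Ext.{w} A B 0)
    (y : Abelian.Ext.{w} B A 0)
    (hxy : x.comp y (add_zero 0) = Abelian.Ext.mk₀ (𝟙 A)) :
    ∃ (i : A ⟶ B) (r : B ⟶ A), i ≫ r = 𝟙 A := by
  letI := HasDerivedCategory.standard C
  have h0 : ((0 : ℕ) : ℤ) = 0 := rfl
  let e : ∀ (M : C), (DerivedCategory.homologyFunctor C 0).obj
      ((DerivedCategory.singleFunctor C 0).obj M) ≅ M := fun M =>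
    (DerivedCategory.homologyFunctorFactors C 0).app ((CochainComplex.singleFunctor C 0).obj M) ≪≫
      (HomologicalComplex.homologyFunctorSingleIso C (ComplexShape.up ℤ) 0).app M
  let E : ∀ (M N : C), ((DerivedCategory.singleFunctor C 0).obj M ⟶
        (DerivedCategory.singleFunctor C 0).obj N) ≃
      ShiftedHom ((DerivedCategory.singleFunctor C 0).obj M)
        ((DerivedCategory.singleFunctor C 0).obj N) ((0 : ℕ) : ℤ) := fun M N =>
    ShiftedHom.homEquiv ((0 : ℕ) : ℤ) h0
  let u : ∀ {M N : C}, Abelian.Ext.{w} M N 0 →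
      ((DerivedCategory.singleFunctor C 0).obj M ⟶ (DerivedCategory.singleFunctor C 0).obj N) :=
    fun {M N} α => (E M N).symm α.hom
  have hu_mk₀ : ∀ {M N : C} (f : M ⟶ N),
      u (Abelian.Ext.mk₀ f) = (DerivedCategory.singleFunctor C 0).map f := by
    intro M N f
    dsimp only [u]
    rw [Abelian.Ext.mk₀_hom]
    change (E M N).symm ((E M N) ((DerivedCategory.singleFunctor C 0).map f)) = _
    rw [Equiv.symm_apply_apply]
  have hu_comp : ∀ {M N P : C} (α : Abelian.Ext.{w} M N 0) (β : Abelian.Ext.{w} N P 0),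
      u (α.comp β (add_zero 0)) = u α ≫ u β := by
    intro M N P α β
    dsimp only [u]
    rw [Abelian.Ext.comp_hom]
    generalize α.hom = a
    generalize β.hom = b
    obtain ⟨fa, rfl⟩ := (E M N).surjective a
    rw [Equiv.symm_apply_apply]
    have : ((E M N) fa).comp b (by rw [h0, add_zero]) = fa ≫ b := ShiftedHom.mk₀_comp _ h0 fa b
    rw [this]
    simp [E, ShiftedHom.homEquiv, Category.assoc]
  have key : u x ≫ u y = 𝟙 _ := by
    rw [← hu_comp, hxy, hu_mk₀, CategoryTheory.Functor.map_id]
  refine ⟨(e A).inv ≫ (DerivedCategory.homologyFunctor C 0).map (u x) ≫ (e B).hom,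
    (e B).inv ≫ (DerivedCategory.homologyFunctor C 0).map (u y) ≫ (e A).hom, ?_⟩
  simp only [Category.assoc, Iso.hom_inv_id_assoc]
  rw [← CategoryTheory.Functor.map_comp_assoc, key, CategoryTheory.Functor.map_id,
    Category.id_comp, Iso.inv_hom_id]

/-- If `Ext¹(Z, X) = 0`, then `Z` is a direct summand of `Y`. -/
lemma ses_section [HasExt.{w} C] {X Y Z : C} {f : X ⟶ Y} {g : Y ⟶ Z} {zero : f ≫ g = 0}
    (hS : (ShortComplex.mk f g zero).ShortExact) (h1 : Subsingleton (Abelian.Ext.{w} Z X 1)) :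
    ∃ (i : Z ⟶ Y) (r : Y ⟶ Z), i ≫ r = 𝟙 Z := by
  obtain ⟨x₂, hx₂⟩ := Abelian.Ext.covariant_sequence_exact₃ Z hS
    (Abelian.Ext.mk₀ (𝟙 Z)) (zero_add 1) (Subsingleton.elim _ 0)
  exact retract_of_ext0 x₂ (Abelian.Ext.mk₀ g) hx₂

/-- If `Ext¹(Z, X) = 0`, then `X` is a direct summand of `Y`. -/
lemma ses_retraction [HasExt.{w} C] {X Y Z : C} {f : X ⟶ Y} {g : Y ⟶ Z} {zero : f ≫ g = 0}
    (hS : (ShortComplex.mk f g zero).ShortExact) (h1 : Subsingleton (Abelian.Ext.{w} Z X 1)) :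
    ∃ (i : X ⟶ Y) (r : Y ⟶ X), i ≫ r = 𝟙 X := by
  obtain ⟨x₂, hx₂⟩ := Abelian.Ext.contravariant_sequence_exact₁ hS X
    (Abelian.Ext.mk₀ (𝟙 X)) (add_zero 1) (Subsingleton.elim _ 0)
  exact retract_of_ext0 (Abelian.Ext.mk₀ f) x₂ hx₂

lemma ext_subsingleton_of_retract_right [HasExt.{w} C] {T N Y : C} (i : N ⟶ Y) (r : Y ⟶ N)
    (hir : i ≫ r = 𝟙 N) (n : ℕ) (hsub : Subsingleton (Abelian.Ext.{w} T Y n)) :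
    Subsingleton (Abelian.Ext.{w} T N n) := by
  refine subsingleton_of_forall_eq 0 fun α => ?_
  have : α = (α.comp (Abelian.Ext.mk₀ i) (add_zero n)).comp (Abelian.Ext.mk₀ r) (add_zero n) := by
    rw [Abelian.Ext.comp_assoc_of_third_deg_zero, Abelian.Ext.mk₀_comp_mk₀, hir,
      Abelian.Ext.comp_mk₀_id]
  rw [this, Subsingleton.elim (α.comp (Abelian.Ext.mk₀ i) (add_zero n)) 0,
    Abelian.Ext.zero_comp]

lemma ext_subsingleton_of_retract_left [HasExt.{w} C] {T N Y : C} (i : N ⟶ Y) (r : Y ⟶ N)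
    (hir : i ≫ r = 𝟙 N) (n : ℕ) (hsub : Subsingleton (Abelian.Ext.{w} Y T n)) :
    Subsingleton (Abelian.Ext.{w} N T n) := by
  refine subsingleton_of_forall_eq 0 fun α => ?_
  have : α = (Abelian.Ext.mk₀ i).comp ((Abelian.Ext.mk₀ r).comp α (zero_add n)) (zero_add n) := by
    rw [Abelian.Ext.mk₀_comp_mk₀_assoc, hir, Abelian.Ext.mk₀_id_comp]
  rw [this, Subsingleton.elim ((Abelian.Ext.mk₀ r).comp α (zero_add n)) 0,
    Abelian.Ext.comp_zero]

lemma ses_iso_left {X X' Y Z : C} (h : SES X Y Z) (e : X ≅ X') : SES X' Y Z := by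
  obtain ⟨f, g, zero, hS⟩ := h
  refine ⟨e.inv ≫ f, g, by rw [Category.assoc, zero, comp_zero], ?_⟩
  exact ShortComplex.shortExact_of_iso
    (ShortComplex.isoMk e (Iso.refl Y) (Iso.refl Z) (by simp) (by simp)) hS

lemma ses_iso_middle {X Y Y' Z : C} (h : SES X Y Z) (e : Y ≅ Y') : SES X Y' Z := by
  obtain ⟨f, g, zero, hS⟩ := h
  refine ⟨f ≫ e.hom, e.inv ≫ g, by simp [reassoc_of% zero, zero], ?_⟩
  exact ShortComplex.shortExact_of_iso
    (ShortComplex.isoMk (Iso.refl X) e (Iso.refl Z) (by simp) (by simp)) hS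

lemma ses_zero_left {B M : C} (e : M ≅ B) : SES (0 : C) B M := by
  refine ⟨0, e.inv, zero_comp, ?_⟩
  refine ShortComplex.ShortExact.mk' ?_ ?_ ?_
  · rw [ShortComplex.exact_iff_mono _ rfl]
    · exact inferInstance
  · exact ⟨fun u v _ => (isZero_zero C).eq_of_tgt u v⟩
  · exact inferInstance

/-- Pushing out a short exact sequence `K ↣ A ↠ M` along `h : K ⟶ B` gives a short
exact sequence `B ↣ pushout f h ↠ M`. -/
lemma pushout_ses_inr {K A M B : C} {f : K ⟶ A} {g : A ⟶ M} {zero : f ≫ g = 0}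
    (hS : (ShortComplex.mk f g zero).ShortExact) (h : K ⟶ B) :
    SES B (pushout f h) M := by
  haveI := hS.mono_f
  haveI := hS.epi_g
  have hcond : f ≫ g = h ≫ (0 : B ⟶ M) := by rw [zero, comp_zero]
  refine ⟨pushout.inr f h, pushout.desc g 0 hcond, pushout.inr_desc g 0 hcond, ?_⟩
  have hepi : Epi (pushout.desc g 0 hcond) := by
    have : Epi (pushout.inl f h ≫ pushout.desc g 0 hcond) := by
      rw [pushout.inl_desc]; exact hS.epi_g
    exact epi_of_epi (pushout.inl f h) _
  have hmono : Mono (pushout.inr f h) := inferInstance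
  have hcolim : IsColimit (CokernelCofork.ofπ g zero) := hS.exact.gIsCokernel
  refine ShortComplex.ShortExact.mk' ?_ hmono hepi
  refine ShortComplex.exact_of_g_is_cokernel _ ?_
  refine CokernelCofork.IsColimit.ofπ' _ _ (fun {T} k hk => ?_)
  have hfk : f ≫ (pushout.inl f h ≫ k) = 0 := by
    rw [← Category.assoc, pushout.condition, Category.assoc, hk, comp_zero]
  obtain ⟨l, hl⟩ := CokernelCofork.IsColimit.desc' hcolim (pushout.inl f h ≫ k) hfk
  refine ⟨l, ?_⟩
  apply pushout.hom_ext
  · rw [pushout.inl_desc_assoc]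
    exact hl
  · rw [pushout.inr_desc_assoc, zero_comp, hk]

/-- Given a short exact sequence `Y ↣ X ↠ M` and a mono `u : X ⟶ W`, we get a short
exact sequence `Y ↣ W ↠ pushout u g`. -/
lemma pushout_ses_row {Y X M W : C} {f : Y ⟶ X} {g : X ⟶ M} {zero : f ≫ g = 0}
    (hS : (ShortComplex.mk f g zero).ShortExact) (u : X ⟶ W) [Mono u] :
    SES Y W (pushout u g) := by
  haveI := hS.mono_f
  haveI := hS.epi_g
  have zero' : (f ≫ u) ≫ pushout.inl u g = 0 := by
    rw [Category.assoc, pushout.condition, ← Category.assoc, zero, zero_comp]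
  refine ⟨f ≫ u, pushout.inl u g, zero', ?_⟩
  have hmono : Mono (f ≫ u) := mono_comp _ _
  have hepi : Epi (pushout.inl u g) := inferInstance
  have hcolim : IsColimit (CokernelCofork.ofπ g zero) := hS.exact.gIsCokernel
  refine ShortComplex.ShortExact.mk' ?_ hmono hepi
  refine ShortComplex.exact_of_g_is_cokernel _ ?_
  refine CokernelCofork.IsColimit.ofπ' _ _ (fun {T} k hk => ?_)
  have hfk : f ≫ (u ≫ k) = 0 := by rw [← Category.assoc]; exact hk
  obtain ⟨l, hl⟩ := CokernelCofork.IsColimit.desc' hcolim (u ≫ k) hfk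
  have hl' : g ≫ l = u ≫ k := hl
  refine ⟨pushout.desc k l hl'.symm, ?_⟩
  exact pushout.inl_desc _ _ _

/-- Given short exact sequences `K ↣ A ↠ M` and `K ↣ B ↠ C'`, there is an object `P`
with short exact sequences `B ↣ P ↠ M` and `A ↣ P ↠ C'`. -/
lemma pushout_square {K A M B C' : C} (h₁ : SES K A M) (h₂ : SES K B C') :
    ∃ P : C, SES B P M ∧ SES A P C' := by
  obtain ⟨f, g, zero₁, hS₁⟩ := h₁
  obtain ⟨p, q, zero₂, hS₂⟩ := h₂
  refine ⟨pushout f p, pushout_ses_inr hS₁ p, ?_⟩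
  exact ses_iso_middle (pushout_ses_inr hS₂ f) (pushoutSymmetry p f)

lemma resDimLE_mono_class {A B : Set C} (hAB : A ⊆ B) : ∀ n, ResDimLE A n ⊆ ResDimLE B n := by
  intro n
  induction n with
  | zero => exact fun X ⟨B₀, hB₀, e⟩ => ⟨B₀, hAB hB₀, e⟩
  | succ n ih =>
    rintro X (hX | ⟨K, B₀, hK, hB₀, hses⟩)
    · exact Or.inl (ih hX)
    · exact Or.inr ⟨K, B₀, ih hK, hAB hB₀, hses⟩

lemma mem_resDimLE_zero {A : Set C} {X : C} (hX : X ∈ A) : X ∈ ResDimLE A 0 :=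
  ⟨X, hX, ⟨Iso.refl X⟩⟩

lemma resDimLE_nonempty {A : Set C} : ∀ n, ∀ X, X ∈ ResDimLE A n → A.Nonempty := by
  intro n
  induction n with
  | zero => exact fun X ⟨B₀, hB₀, _⟩ => ⟨B₀, hB₀⟩
  | succ n ih =>
    rintro X (hX | ⟨K, B₀, _, hB₀, _⟩)
    · exact ih X hX
    · exact ⟨B₀, hB₀⟩

lemma zero_mem_of_closed {A : Set C} (hA : ClosedUnderDirectSummands A) (hne : A.Nonempty) :
    (0 : C) ∈ A := by
  obtain ⟨W, hW⟩ := hne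
  exact hA (0 : (0 : C) ⟶ W) (0 : W ⟶ (0 : C)) ((isZero_zero C).eq_of_src _ _) hW

section Frobenius

variable [HasExt.{w} C] {𝒳 ω : Set C}

/-- `Ext`-vanishing extends from `ω` to `ω^∧`. -/
lemma extVanish_of_resDimLE (h : LeftFrobenius.{w} 𝒳 ω) :
    ∀ n, ∀ Y ∈ ResDimLE ω n, ∀ X ∈ 𝒳, extVanish.{w} X Y := by
  intro n
  induction n with
  | zero =>
    rintro Y ⟨W, hW, ⟨e⟩⟩ X hX i hi
    exact ext_subsingleton_of_retract_right e.hom e.inv e.hom_inv_id i (h.2.2.1 X hX W hW i hi)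
  | succ n ih =>
    rintro Y (hY | ⟨K, W, hK, hW, f, g, zero, hS⟩) X hX i hi
    · exact ih Y hY X hX i hi
    · haveI hK1 : Subsingleton (Abelian.Ext.{w} X K (i + 1)) := ih K hK X hX (i + 1) (by omega)
      haveI hW1 : Subsingleton (Abelian.Ext.{w} X W i) := h.2.2.1 X hX W hW i hi
      refine subsingleton_of_forall_eq 0 fun x₃ => ?_
      obtain ⟨x₂, hx₂⟩ := Abelian.Ext.covariant_sequence_exact₃ X hS x₃ rfl
        (Subsingleton.elim _ 0)
      rw [← hx₂, Subsingleton.elim x₂ (0 : Abelian.Ext.{w} X W i), Abelian.Ext.zero_comp]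

/-- From a first-type approximation we get a second-type approximation. -/
lemma st_of_ft (h : LeftFrobenius.{w} 𝒳 ω) {M : C}
    (hft : ∃ Y X, Y ∈ ResFin ω ∧ X ∈ 𝒳 ∧ SES Y X M) :
    ∃ Y X, Y ∈ ResFin ω ∧ X ∈ 𝒳 ∧ SES M Y X := by
  obtain ⟨Y, Xx, ⟨m, hYm⟩, hXx, f, g, zero, hS⟩ := hft
  obtain ⟨W, X', hW, hX', u, v, zero₂, hT⟩ := h.2.2.2.2 Xx hXx
  haveI : Mono u := hT.mono_f
  refine ⟨pushout u g, X', ⟨m + 1, Or.inr ⟨Y, W, hYm, hW, pushout_ses_row hS u⟩⟩, hX', ?_⟩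
  exact pushout_ses_inr hT g

/-- Auslander–Buchweitz approximations: first-type approximations exist on `𝒳^∧`. -/
lemma ft_of_resDimLE (h : LeftFrobenius.{w} 𝒳 ω) (hω0 : (0 : C) ∈ ω) :
    ∀ n, ∀ M ∈ ResDimLE 𝒳 n, ∃ Y X, Y ∈ ResFin ω ∧ X ∈ 𝒳 ∧ SES Y X M := by
  intro n
  induction n with
  | zero =>
    rintro M ⟨X₀, hX₀, ⟨e⟩⟩
    exact ⟨0, X₀, ⟨0, mem_resDimLE_zero hω0⟩, hX₀, ses_zero_left e⟩
  | succ n ih =>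
    rintro M (hM | ⟨K, X₀, hK, hX₀, hses⟩)
    · exact ih M hM
    · obtain ⟨Y', X'', hY', hX'', hst⟩ := st_of_ft h (ih K hK)
      obtain ⟨P, hP₁, hP₂⟩ := pushout_square hses hst
      exact ⟨Y', P, hY', h.1.1 hP₂ hX₀ hX'', hP₁⟩

/-- Membership in `ω^∧` from total `Ext`-orthogonality, for objects of `𝒳^∧`. -/
lemma mem_resFin_omega (h : LeftFrobenius.{w} 𝒳 ω) (hω0 : (0 : C) ∈ ω) {N : C}
    (hN : ∀ X ∈ 𝒳, extVanish.{w} X N) {n : ℕ} (hNfin : N ∈ ResDimLE 𝒳 n) :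
    N ∈ ResFin ω := by
  obtain ⟨Y, Xn, ⟨m, hYm⟩, hXn, f, g, zero, hS⟩ := ft_of_resDimLE h hω0 n N hNfin
  have hXnperp : ∀ X ∈ 𝒳, ∀ i : ℕ, 1 ≤ i → Subsingleton (Abelian.Ext.{w} X Xn i) := by
    intro X hX i hi
    haveI hN1 : Subsingleton (Abelian.Ext.{w} X N i) := hN X hX i hi
    haveI hY1 : Subsingleton (Abelian.Ext.{w} X Y i) :=
      extVanish_of_resDimLE h m Y hYm X hX i hi
    refine subsingleton_of_forall_eq 0 fun x₂ => ?_
    obtain ⟨x₁, hx₁⟩ := Abelian.Ext.covariant_sequence_exact₂ X hS x₂ (Subsingleton.elim _ 0)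
    rw [← hx₁, Subsingleton.elim x₁ (0 : Abelian.Ext.{w} X Y i), Abelian.Ext.zero_comp]
  obtain ⟨W, X', hW, hX', u, v, zero₂, hT⟩ := h.2.2.2.2 Xn hXn
  obtain ⟨i, r, hir⟩ := ses_retraction hT (hXnperp X' hX' 1 le_rfl)
  have hXnω : Xn ∈ ω := h.2.1 i r hir hW
  exact ⟨m + 1, Or.inr ⟨Y, Xn, hYm, hXnω, f, g, zero, hS⟩⟩

end Frobenius

end AuxProofs

/-- Proposition 2.7 (1). For a left Frobenius pair `(𝒳, ω)`, the following
are equivalent: (a) `(𝒳, ω^∧)` is a complete left cotorsion pair in `C`; (b) `(𝒳, ω^∧)` is a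
complete cotorsion pair in `C`; (c) every object of `C` lies in `𝒳^∧`. -/
theorem leftFrobenius_completeLeftCotorsionPair_tfae
    {C : Type u} [CategoryTheory.Category.{v} C] [CategoryTheory.Abelian C]
    [CategoryTheory.HasExt.{w} C]
    (𝒳 ω : Set C) (h : LeftFrobenius.{w} 𝒳 ω) :
    (CompleteLeftCotorsionPair.{w} 𝒳 (ResFin ω) ↔ CompleteCotorsionPair.{w} 𝒳 (ResFin ω)) ∧
    (CompleteLeftCotorsionPair.{w} 𝒳 (ResFin ω) ↔ ∀ M : C, M ∈ ResFin 𝒳) := by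
  have hωX : ω ⊆ 𝒳 := h.2.2.2.1
  -- (a) implies (c)
  have hac : CompleteLeftCotorsionPair.{w} 𝒳 (ResFin ω) → ∀ M : C, M ∈ ResFin 𝒳 := by
    rintro ⟨-, hcomp⟩ M
    obtain ⟨B₀, A₀, ⟨n, hB⟩, hA, hses⟩ := hcomp M
    exact ⟨n + 1, Or.inr ⟨B₀, A₀, resDimLE_mono_class hωX n hB, hA, hses⟩⟩
  -- (c) implies (b)
  have key : (∀ M : C, M ∈ ResFin 𝒳) → CompleteCotorsionPair.{w} 𝒳 (ResFin ω) := by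
    intro hc
    have hω0 : (0 : C) ∈ ω := by
      obtain ⟨n, h0X⟩ := hc (0 : C)
      obtain ⟨X₁, hX₁⟩ := resDimLE_nonempty n _ h0X
      obtain ⟨W, X', hW, -, -⟩ := h.2.2.2.2 X₁ hX₁
      exact zero_mem_of_closed h.2.1 ⟨W, hW⟩
    have ft_all : ∀ M : C, ∃ Y X, Y ∈ ResFin ω ∧ X ∈ 𝒳 ∧ SES Y X M := by
      intro M
      obtain ⟨n, hn⟩ := hc M
      exact ft_of_resDimLE h hω0 n M hn
    have st_all : ∀ M : C, ∃ Y X, Y ∈ ResFin ω ∧ X ∈ 𝒳 ∧ SES M Y X :=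
      fun M => st_of_ft h (ft_all M)
    have L1 : ∀ X ∈ 𝒳, ∀ Y ∈ ResFin ω, extVanish.{w} X Y := by
      rintro X hX Y ⟨n, hY⟩
      exact extVanish_of_resDimLE h n Y hY X hX
    have eq1 : 𝒳 = leftPerp1.{w} (ResFin ω) := by
      apply Set.Subset.antisymm
      · intro X hX Y hY
        exact L1 X hX Y hY 1 le_rfl
      · intro M hM
        obtain ⟨Y, Xx, hY, hXx, f, g, zero, hS⟩ := ft_all M
        obtain ⟨i, r, hir⟩ := ses_section hS (hM Y hY)
        exact h.1.2.2 i r hir hXx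
    have eq2 : ResFin ω = rightPerp1.{w} 𝒳 := by
      apply Set.Subset.antisymm
      · intro Y hY X hX
        exact L1 X hX Y hY 1 le_rfl
      · intro N hN
        obtain ⟨Y', X'', hY'fin, hX'', a, b, zero, hU⟩ := st_all N
        obtain ⟨i, r, hir⟩ := ses_retraction hU (hN X'' hX'')
        obtain ⟨m', hm'⟩ := hY'fin
        have hNperp : ∀ X ∈ 𝒳, extVanish.{w} X N := by
          intro X hX j hj
          exact ext_subsingleton_of_retract_right i r hir j
            (extVanish_of_resDimLE h m' Y' hm' X hX j hj)
        obtain ⟨n, hn⟩ := hc N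
        exact mem_resFin_omega h hω0 hNperp hn
    exact ⟨⟨eq1, fun X => ft_all X⟩, eq2, fun X => st_all X⟩
  constructor
  · exact ⟨fun ha => key (hac ha), fun hb => hb.1⟩
  · exact ⟨hac, fun hc => (key hc).1⟩

end CutPaper
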